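/- Let D and R be finite types and let f : (Fin n → D) → R be a symmetric function, i.e., f(x ∘ π) = f(x) for every x : Fin n → D and every permutation π of Fin n. If f is computed by a read-once D-way branching program with σ nodes, then f is computed by a read-once D-way branching program with σ nodes in which, along every directed path from the source to a sink, the sequence of queried input indices is strictly increasing (in particular, the program is oblivious read-once). -/

import Mathlib

/-- A `D`-way branching program on inputs `x : Fin n → D` with output labels in `R`:
a finite set of nodes; each node is either an internal node labeled by an input index with
one successor per value in `D`, or a sink labeled by an output value. Acyclicity is
witnessed by a rank function decreasing along edges. -/
structure BranchingProgram (n : ℕ) (D R : Type*) where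
  V : Type
  [fintypeV : Fintype V]
  source : V
  label : V → (Fin n × (D → V)) ⊕ R
  rank : V → ℕ
  wf : ∀ v i f d, label v = Sum.inl (i, f) → rank (f d) < rank v

attribute [instance] BranchingProgram.fintypeV

/-- The value computed from node `v` on input `x`. -/
def BranchingProgram.eval {n : ℕ} {D R : Type*} (B : BranchingProgram n D R)
    (x : Fin n → D) (v : B.V) : R :=
  match h : B.label v with
  | Sum.inr r => r
  | Sum.inl (i, f) => B.eval x (f (x i))
termination_by B.rank v
decreasing_by exact B.wf v i f (x i) h

/-- There is an edge from `u` to `v`. -/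
def BranchingProgram.Edge {n : ℕ} {D R : Type*} (B : BranchingProgram n D R)
    (u v : B.V) : Prop :=
  ∃ i f d, B.label u = Sum.inl (i, f) ∧ f d = v

/-- The input index queried at a node (`none` for sinks). -/
def BranchingProgram.qIdx {n : ℕ} {D R : Type*} (B : BranchingProgram n D R)
    (v : B.V) : Option (Fin n) :=
  Sum.elim (fun q => some q.1) (fun _ => none) (B.label v)

/-- Read-once: along every directed path from the source, queried indices are distinct. -/
def BranchingProgram.ReadOnce {n : ℕ} {D R : Type*} (B : BranchingProgram n D R) : Prop :=
  ∀ p : List B.V, List.Chain B.Edge B.source p →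
    ((B.source :: p).filterMap B.qIdx).Nodup


namespace BranchingProgram

variable {n : ℕ} {D R : Type*}

/-! ### Unfolding lemmas for `eval` -/

theorem eval_inr (B : BranchingProgram n D R) (x : Fin n → D) {v : B.V} {r : R}
    (h : B.label v = Sum.inr r) : B.eval x v = r := by
  rw [BranchingProgram.eval]
  split <;> simp_all

theorem eval_inl (B : BranchingProgram n D R) (x : Fin n → D) {v : B.V} {i : Fin n}
    {fc : D → B.V} (h : B.label v = Sum.inl (i, fc)) :
    B.eval x v = B.eval x (fc (x i)) := by
  rw [BranchingProgram.eval]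
  split <;> simp_all

/-! ### The run (path followed) from a node -/

/-- The list of nodes visited after `v` when running on input `x`. -/
def run (B : BranchingProgram n D R) (x : Fin n → D) (v : B.V) : List B.V :=
  match h : B.label v with
  | Sum.inr _ => []
  | Sum.inl (i, fc) => fc (x i) :: run B x (fc (x i))
termination_by B.rank v
decreasing_by exact B.wf v i fc (x i) h

theorem run_inr (B : BranchingProgram n D R) (x : Fin n → D) {v : B.V} {r : R}
    (h : B.label v = Sum.inr r) : run B x v = [] := by
  rw [run]
  split <;> simp_all

theorem run_inl (B : BranchingProgram n D R) (x : Fin n → D) {v : B.V} {i : Fin n}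
    {fc : D → B.V} (h : B.label v = Sum.inl (i, fc)) :
    run B x v = fc (x i) :: run B x (fc (x i)) := by
  rw [run]
  split <;> simp_all

theorem chain_run (B : BranchingProgram n D R) (x : Fin n → D) (v : B.V) :
    List.Chain B.Edge v (run B x v) := by
  suffices H : ∀ k v, B.rank v < k → List.Chain B.Edge v (run B x v) by
    exact H (B.rank v + 1) v (by omega)
  intro k
  induction k with
  | zero => intro v h; omega
  | succ k IH =>
    intro v hv
    cases hl : B.label v with
    | inr r => rw [run_inr B x hl]; exact List.Chain.nil
    | inl p =>
      obtain ⟨i, fc⟩ := p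
      rw [run_inl B x hl]
      refine List.Chain.cons ⟨i, fc, x i, hl, rfl⟩ (IH _ ?_)
      have := B.wf v i fc (x i) hl
      omega

/-! ### Height -/

/-- The maximal number of queries on a path starting at `v`. -/
noncomputable def hgt [Fintype D] (B : BranchingProgram n D R) (v : B.V) : ℕ :=
  match h : B.label v with
  | Sum.inr _ => 0
  | Sum.inl (_, fc) => (Finset.univ.sup fun d => hgt B (fc d)) + 1
termination_by B.rank v
decreasing_by exact B.wf v _ fc d h

variable [Fintype D]

theorem hgt_inr (B : BranchingProgram n D R) {v : B.V} {r : R}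
    (h : B.label v = Sum.inr r) : hgt B v = 0 := by
  rw [hgt]; split <;> simp_all

theorem hgt_inl (B : BranchingProgram n D R) {v : B.V} {i : Fin n} {fc : D → B.V}
    (h : B.label v = Sum.inl (i, fc)) :
    hgt B v = (Finset.univ.sup fun d => hgt B (fc d)) + 1 := by
  rw [hgt]; split <;> simp_all

theorem hgt_child_lt (B : BranchingProgram n D R) {v : B.V} {i : Fin n} {fc : D → B.V}
    (h : B.label v = Sum.inl (i, fc)) (d : D) : hgt B (fc d) < hgt B v := by
  rw [hgt_inl B h]
  exact Nat.lt_succ_of_le (Finset.le_sup (f := fun d => hgt B (fc d)) (Finset.mem_univ d))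

theorem hgt_pos (B : BranchingProgram n D R) {v : B.V} {i : Fin n} {fc : D → B.V}
    (h : B.label v = Sum.inl (i, fc)) : 1 ≤ hgt B v := by
  rw [hgt_inl B h]; omega

/-! ### Reachability -/

/-- `v` is reachable from the source. -/
def Good (B : BranchingProgram n D R) (v : B.V) : Prop :=
  ∃ p : List B.V, List.Chain B.Edge B.source p ∧
    (B.source :: p).getLast (List.cons_ne_nil _ _) = v

theorem good_source (B : BranchingProgram n D R) : Good B B.source :=
  ⟨[], List.Chain.nil, rfl⟩

theorem chain_concat {α : Type*} {Rel : α → α → Prop} :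
    ∀ (p : List α) (a v : α) (q : List α), List.Chain Rel a p →
      (a :: p).getLast (List.cons_ne_nil _ _) = v → List.Chain Rel v q →
      List.Chain Rel a (p ++ q) := by
  intro p
  induction p with
  | nil =>
    intro a v q _ hl hq
    simp at hl
    simpa [hl] using hq
  | cons b t IH =>
    intro a v q hc hl hq
    obtain ⟨hab, hbt⟩ := List.isChain_cons_cons.mp hc
    refine List.Chain.cons hab (IH b v q hbt ?_ hq)
    simpa using hl

theorem good_step {B : BranchingProgram n D R} {v : B.V} (hg : Good B v) {i : Fin n}
    {fc : D → B.V} (h : B.label v = Sum.inl (i, fc)) (d : D) : Good B (fc d) := by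
  obtain ⟨p, hc, hl⟩ := hg
  refine ⟨p ++ [fc d], ?_, ?_⟩
  · exact chain_concat p B.source v [fc d] hc hl
      (List.IsChain.cons_cons ⟨i, fc, d, h, rfl⟩ (List.IsChain.singleton _))
  · simpa using List.getLast_append (l := B.source :: p) (a := fc d)

/-- Existence of a path from `v` realizing `hgt`. -/
theorem exists_path [Nonempty D] (B : BranchingProgram n D R) :
    ∀ v : B.V, ∃ q : List B.V, List.Chain B.Edge v q ∧
      ((v :: q).filterMap B.qIdx).length = hgt B v := by
  suffices H : ∀ k v, B.rank v < k → ∃ q : List B.V, List.Chain B.Edge v q ∧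
      ((v :: q).filterMap B.qIdx).length = hgt B v by
    exact fun v => H (B.rank v + 1) v (by omega)
  intro k
  induction k with
  | zero => intro v h; omega
  | succ k IH =>
    intro v hv
    cases hl : B.label v with
    | inr r =>
      exact ⟨[], List.Chain.nil, by simp [BranchingProgram.qIdx, hl, hgt_inr B hl]⟩
    | inl p =>
      obtain ⟨i, fc⟩ := p
      obtain ⟨d0, -, hd0⟩ := Finset.exists_mem_eq_sup (Finset.univ : Finset D)
        Finset.univ_nonempty (fun d => hgt B (fc d))
      have hrk : B.rank (fc d0) < k := by
        have := B.wf v i fc d0 hl; omega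
      obtain ⟨q0, hc0, hl0⟩ := IH (fc d0) hrk
      refine ⟨fc d0 :: q0, List.Chain.cons ⟨i, fc, d0, hl, rfl⟩ hc0, ?_⟩
      rw [show (v :: fc d0 :: q0).filterMap B.qIdx
            = i :: (fc d0 :: q0).filterMap B.qIdx by
          simp [BranchingProgram.qIdx, hl]]
      simp [hl0, hgt_inl B hl, hd0]

theorem hgt_le_of_good [Nonempty D] {B : BranchingProgram n D R} (hro : B.ReadOnce)
    {v : B.V} (hg : Good B v) : hgt B v ≤ n := by
  obtain ⟨p, hc, hl⟩ := hg
  obtain ⟨q, hcq, hlen⟩ := exists_path B v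
  have hchain : List.Chain B.Edge B.source (p ++ q) :=
    chain_concat p B.source v q hc hl hcq
  have hnodup := hro (p ++ q) hchain
  have hsplit : B.source :: (p ++ q) = (B.source :: p).dropLast ++ (v :: q) := by
    conv_lhs => rw [show B.source :: (p ++ q) = (B.source :: p) ++ q by simp]
    rw [← List.dropLast_append_getLast (l := B.source :: p) (List.cons_ne_nil _ _)]
    simp [hl]
  rw [hsplit] at hnodup
  have hsub : (v :: q).Sublist ((B.source :: p).dropLast ++ (v :: q)) :=
    List.sublist_append_right _ _
  have hnd : ((v :: q).filterMap B.qIdx).Nodup :=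
    List.Nodup.sublist (hsub.filterMap _) hnodup
  calc hgt B v = ((v :: q).filterMap B.qIdx).length := hlen.symm
    _ ≤ Fintype.card (Fin n) := hnd.length_le_card
    _ = n := Fintype.card_fin n

/-! ### The oblivious relabeling -/

/-- The relabeled program: reachable internal nodes query index `n - hgt`. -/
noncomputable def oblivify (B : BranchingProgram n D R) (r0 : R) :
    BranchingProgram n D R where
  V := B.V
  source := B.source
  rank := B.rank
  label := fun v =>
    letI := Classical.propDecidable (Good B v)
    if Good B v then
      Sum.map (fun p : Fin n × (D → B.V) =>
        (⟨n - max 1 (hgt B v),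
          Nat.sub_lt (Nat.lt_of_le_of_lt (Nat.zero_le _) p.1.isLt)
            (lt_of_lt_of_le one_pos (le_max_left _ _))⟩, p.2)) id (B.label v)
    else Sum.inr r0
  wf := by
    intro v i fc d h
    split at h
    · cases hl : B.label v with
      | inr r => rw [hl] at h; simp [Sum.map] at h
      | inl p =>
        obtain ⟨j, gc⟩ := p
        rw [hl] at h
        simp only [Sum.map, Sum.elim_inl, Function.comp_apply, Sum.inl.injEq, Prod.mk.injEq] at h
        rw [← h.2]
        exact B.wf v j gc d hl
    · simp at h

variable {B : BranchingProgram n D R} {r0 : R}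

theorem oblivify_label_inr {v : B.V} (hg : Good B v) {r : R}
    (hl : B.label v = Sum.inr r) : (oblivify B r0).label v = Sum.inr r := by
  simp only [oblivify, hl]
  rw [if_pos hg]
  rfl

theorem oblivify_label_inl {v : B.V} (hg : Good B v) {i : Fin n} {fc : D → B.V}
    (hl : B.label v = Sum.inl (i, fc)) :
    ∃ i' : Fin n, (oblivify B r0).label v = Sum.inl (i', fc) ∧
      (i' : ℕ) = n - max 1 (hgt B v) := by
  refine ⟨⟨n - max 1 (hgt B v),
    Nat.sub_lt (Nat.lt_of_le_of_lt (Nat.zero_le _) i.isLt)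
      (lt_of_lt_of_le one_pos (le_max_left _ _))⟩, ?_, rfl⟩
  simp only [oblivify, hl]
  rw [if_pos hg]
  rfl

theorem oblivify_label_inl_inv {v : B.V} {i' : Fin n} {fc : D → B.V}
    (h : (oblivify B r0).label v = Sum.inl (i', fc)) :
    Good B v ∧ ∃ i, B.label v = Sum.inl (i, fc) ∧ (i' : ℕ) = n - max 1 (hgt B v) := by
  simp only [oblivify] at h
  split at h
  · rename_i hg
    refine ⟨hg, ?_⟩
    cases hl : B.label v with
    | inr r => rw [hl] at h; simp [Sum.map] at h
    | inl p =>
      obtain ⟨j, gc⟩ := p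
      rw [hl] at h
      simp only [Sum.map, Sum.elim_inl, Function.comp_apply, Sum.inl.injEq, Prod.mk.injEq] at h
      exact ⟨j, by rw [h.2], by rw [← h.1]⟩
  · simp at h

theorem oblivify_edge {u v : B.V} (h : (oblivify B r0).Edge u v) :
    Good B u ∧ B.Edge u v := by
  obtain ⟨i', fc, d, hl, hfd⟩ := h
  obtain ⟨hg, i, hli, -⟩ := oblivify_label_inl_inv hl
  exact ⟨hg, ⟨i, fc, d, hli, hfd⟩⟩

theorem oblivify_chain_good {u : B.V} {p : List B.V} (hg : Good B u)
    (hc : List.Chain (oblivify B r0).Edge u p) : ∀ w ∈ u :: p, Good B w := by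
  induction p generalizing u with
  | nil => intro w hw; simp at hw; simpa [hw]
  | cons v t IH =>
    obtain ⟨huv, hvt⟩ := List.isChain_cons_cons.mp hc
    obtain ⟨-, i, fc, d, hl, hfd⟩ :
        Good B u ∧ ∃ i fc d, B.label u = Sum.inl (i, fc) ∧ fc d = v := by
      obtain ⟨hgu, he⟩ := oblivify_edge huv
      exact ⟨hgu, he⟩
    have hgv : Good B v := hfd ▸ good_step hg hl d
    intro w hw
    rcases List.mem_cons.mp hw with h | h
    · simpa [h]
    · exact IH hgv hvt w h

theorem oblivify_chain {u : B.V} {p : List B.V}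
    (hc : List.Chain (oblivify B r0).Edge u p) : List.Chain B.Edge u p := by
  induction p generalizing u with
  | nil => exact List.Chain.nil
  | cons v t IH =>
    obtain ⟨huv, hvt⟩ := List.isChain_cons_cons.mp hc
    exact List.Chain.cons (oblivify_edge huv).2 (IH hvt)

/-! ### Strict increase -/

theorem oblivify_incr [Nonempty D] (hro : B.ReadOnce) :
    ∀ (p : List B.V) (u : B.V), Good B u →
      List.Chain (oblivify B r0).Edge u p →
      List.Chain' (· < ·) ((u :: p).filterMap (oblivify B r0).qIdx) := by
  intro p
  induction p with
  | nil =>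
    intro u _ _
    cases h : (oblivify B r0).qIdx u <;> erw [List.filterMap_cons, h, List.filterMap_nil] <;> simp [List.Chain']
  | cons v t IH =>
    intro u hgu hc
    obtain ⟨huv, hvt⟩ := List.isChain_cons_cons.mp hc
    obtain ⟨i', fc, d, hl', hfd⟩ := huv
    obtain ⟨-, i, hli, hval⟩ := oblivify_label_inl_inv hl'
    have hgv : Good B v := hfd ▸ good_step hgu hli d
    have hq : (oblivify B r0).qIdx u = some i' := by
      simp [BranchingProgram.qIdx, hl']
    rw [show (u :: v :: t).filterMap (oblivify B r0).qIdx
          = i' :: (v :: t).filterMap (oblivify B r0).qIdx by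
        erw [List.filterMap_cons_some hq]; rfl]
    rw [List.Chain', List.isChain_cons]
    refine ⟨?_, IH v hgv hvt⟩
    intro b hb
    -- b is the head of the filterMap of (v :: t)
    cases hlv : (oblivify B r0).label v with
    | inr r =>
      -- v is a sink, so t = [] and the list is empty
      have ht : t = [] := by
        cases t with
        | nil => rfl
        | cons w t' =>
          obtain ⟨hvw, -⟩ := List.isChain_cons_cons.mp hvt
          obtain ⟨j', gc, d', hl2, -⟩ := hvw
          rw [hlv] at hl2; simp at hl2
      subst ht
      erw [List.filterMap_cons, List.filterMap_nil] at hb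
      simp [BranchingProgram.qIdx, hlv] at hb
    | inl p2 =>
      obtain ⟨j', gc⟩ := p2
      obtain ⟨-, j, hlj, hval2⟩ := oblivify_label_inl_inv hlv
      have hb' : b = j' := by
        erw [List.filterMap_cons_some (show (oblivify B r0).qIdx v = some j' by simp [BranchingProgram.qIdx, hlv])] at hb
        simp [BranchingProgram.qIdx, hlv, List.filterMap_cons] at hb
        simp [hb]
      subst hb'
      -- strict increase
      have h1 : hgt B v < hgt B u := hfd ▸ hgt_child_lt B hli d
      have h2 : 1 ≤ hgt B v := hgt_pos B hlj
      have h3 : hgt B u ≤ n := hgt_le_of_good hro hgu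
      rw [Fin.lt_def, hval, hval2]
      omega

/-! ### Permutation from aligned lists -/

theorem exists_perm_of_zip {m : ℕ} :
    ∀ (l1 l2 : List (Fin m)), l1.Nodup → l2.Nodup →
      ∃ π : Equiv.Perm (Fin m), ∀ a b : Fin m, (a, b) ∈ l1.zip l2 → π a = b := by
  intro l1
  induction l1 with
  | nil => intro l2 _ _; exact ⟨1, by simp⟩
  | cons a t1 IH =>
    intro l2 h1 h2
    cases l2 with
    | nil => exact ⟨1, by simp⟩
    | cons b t2 =>
      obtain ⟨π0, hπ0⟩ := IH t2 (List.nodup_cons.mp h1).2 (List.nodup_cons.mp h2).2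
      refine ⟨Equiv.swap (π0 a) b * π0, ?_⟩
      intro p q hpq
      rcases List.mem_cons.mp hpq with h | h
      · rw [Prod.ext_iff] at h
        obtain ⟨hp, hq⟩ := h
        subst hp; subst hq
        simp [Equiv.Perm.mul_apply, Equiv.swap_apply_left]
      · have hq : q = π0 p := (hπ0 p q h).symm
        have hmem := List.of_mem_zip h
        have hne1 : π0 p ≠ b := fun hcon => (List.nodup_cons.mp h2).1 (hcon ▸ hq ▸ hmem.2)
        have hne2 : π0 p ≠ π0 a := fun hcon =>
          (List.nodup_cons.mp h1).1 (π0.injective hcon ▸ hmem.1)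
        simp [Equiv.Perm.mul_apply, hq,
          Equiv.swap_apply_of_ne_of_ne hne2 hne1]


/-! ### Alignment of queried indices -/

theorem qIdx_some {B : BranchingProgram n D R} {v : B.V} {i : Fin n} {fc : D → B.V}
    (h : B.label v = Sum.inl (i, fc)) : B.qIdx v = some i := by
  simp [BranchingProgram.qIdx, h]

theorem zip_spec {B : BranchingProgram n D R} {r0 : R} :
    ∀ L : List B.V, (∀ u ∈ L, Good B u) → ∀ w ∈ L, ∀ i i' : Fin n,
      B.qIdx w = some i → (oblivify B r0).qIdx w = some i' →
      (i, i') ∈ (L.filterMap B.qIdx).zip (L.filterMap (oblivify B r0).qIdx) := by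
  intro L
  induction L with
  | nil => simp
  | cons u t IH =>
    intro hgood w hw i i' hq hq'
    have hgu : Good B u := hgood u (List.mem_cons_self)
    have IH' := IH (fun z hz => hgood z (List.mem_cons_of_mem _ hz)) w
    cases hl : B.label u with
    | inr r =>
      have e1 : B.qIdx u = none := by simp [BranchingProgram.qIdx, hl]
      have e2 : (oblivify B r0).qIdx u = none := by
        simp [BranchingProgram.qIdx, oblivify_label_inr hgu hl]
      erw [List.filterMap_cons_none e1, List.filterMap_cons_none e2]
      rcases List.mem_cons.mp hw with h | h
      · rw [h, e1] at hq; simp at hq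
      · exact IH' h i i' hq hq'
    | inl pr =>
      obtain ⟨j, fc⟩ := pr
      obtain ⟨j', hlj', -⟩ := oblivify_label_inl hgu hl
      have e1 : B.qIdx u = some j := qIdx_some hl
      have e2 : (oblivify B r0).qIdx u = some j' := qIdx_some hlj'
      erw [List.filterMap_cons_some e1, List.filterMap_cons_some e2, List.zip_cons_cons]
      rcases List.mem_cons.mp hw with h | h
      · rw [h, e1] at hq; rw [h, e2] at hq'
        simp only [Option.some.injEq] at hq hq'
        rw [← hq, ← hq']
        exact List.mem_cons_self
      · exact List.mem_cons_of_mem _ (IH' h i i' hq hq')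

/-! ### Simulation -/

theorem sim {B : BranchingProgram n D R} {r0 : R} (x y : Fin n → D) :
    ∀ v : B.V, Good B v →
      (∀ w ∈ v :: run (oblivify B r0) x v, ∀ (i : Fin n) (fc : D → B.V),
        B.label w = Sum.inl (i, fc) →
        ∀ (i' : Fin n) (fc' : D → B.V), (oblivify B r0).label w = Sum.inl (i', fc') →
          y i = x i') →
      B.eval y v = (oblivify B r0).eval x v := by
  suffices H : ∀ k (v : B.V), B.rank v < k → Good B v →
      (∀ w ∈ v :: run (oblivify B r0) x v, ∀ (i : Fin n) (fc : D → B.V),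
        B.label w = Sum.inl (i, fc) →
        ∀ (i' : Fin n) (fc' : D → B.V), (oblivify B r0).label w = Sum.inl (i', fc') →
          y i = x i') →
      B.eval y v = (oblivify B r0).eval x v by
    exact fun v => H (B.rank v + 1) v (by omega)
  intro k
  induction k with
  | zero => intro v hv; omega
  | succ k IH =>
    intro v hv hg hagree
    cases hl : B.label v with
    | inr r =>
      rw [eval_inr B y hl, eval_inr (oblivify B r0) x (oblivify_label_inr hg hl)]
    | inl pr =>
      obtain ⟨i, fc⟩ := pr
      obtain ⟨i', hl', -⟩ := oblivify_label_inl (r0 := r0) hg hl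
      have hyx : y i = x i' :=
        hagree v (List.mem_cons_self) i fc hl i' fc hl'
      rw [eval_inl B y hl, eval_inl (oblivify B r0) x hl', hyx]
      have hgc : Good B (fc (x i')) := good_step hg hl (x i')
      have hrk : B.rank (fc (x i')) < k := by
        have := B.wf v i fc (x i') hl; omega
      apply IH _ hrk hgc
      intro w hw i2 fc2 h2 i2' fc2' h2'
      apply hagree w ?_ i2 fc2 h2 i2' fc2' h2'
      rw [run_inl (oblivify B r0) x hl']
      exact List.mem_cons_of_mem _ hw

end BranchingProgram

open BranchingProgram in
theorem symmetric_readOnce_to_oblivious {n : ℕ} {D R : Type*} [Fintype D] [Fintype R]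
    (f : (Fin n → D) → R) (hsym : ∀ (x : Fin n → D) (π : Equiv.Perm (Fin n)), f (x ∘ π) = f x)
    (B : BranchingProgram n D R) (hro : B.ReadOnce)
    (hcomp : ∀ x, B.eval x B.source = f x) (σ : ℕ) (hσ : Fintype.card B.V = σ) :
    ∃ B' : BranchingProgram n D R, Fintype.card B'.V = σ ∧
      (∀ x, B'.eval x B'.source = f x) ∧ B'.ReadOnce ∧
      ∀ p : List B'.V, List.Chain B'.Edge B'.source p →
        List.Chain' (· < ·) ((B'.source :: p).filterMap B'.qIdx) := by
  rcases isEmpty_or_nonempty D with hD | hD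
  · -- D is empty: B has no edges, so B itself works.
    have hnil : ∀ p : List B.V, List.Chain B.Edge B.source p → p = [] := by
      intro p hc
      cases p with
      | nil => rfl
      | cons v t =>
        obtain ⟨hsv, -⟩ := List.isChain_cons_cons.mp hc
        obtain ⟨i, fc, d, -, -⟩ := hsv
        exact (IsEmpty.false d).elim
    refine ⟨B, hσ, hcomp, ?_, ?_⟩
    · intro p hc
      rw [hnil p hc]
      cases h : B.qIdx B.source <;> simp [h]
    · intro p hc
      rw [hnil p hc]
      cases h : B.qIdx B.source <;> simp [h, List.Chain']
  · -- D is nonempty: there is a sink, giving a default output value r0.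
    obtain ⟨v0, -, hmin⟩ := Finset.exists_min_image (Finset.univ : Finset B.V) B.rank
      ⟨B.source, Finset.mem_univ _⟩
    cases hl0 : B.label v0 with
    | inl pr =>
      obtain ⟨i, fc⟩ := pr
      have h1 := B.wf v0 i fc hD.some hl0
      have h2 := hmin (fc hD.some) (Finset.mem_univ _)
      omega
    | inr r0 =>
      refine ⟨oblivify B r0, ?_, ?_, ?_, ?_⟩
      · exact (Fintype.card_congr (Equiv.refl _)).trans hσ
      · intro x
        have hchain' : List.Chain (oblivify B r0).Edge B.source
            (run (oblivify B r0) x B.source) := chain_run (oblivify B r0) x B.source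
        have hgood : ∀ w ∈ B.source :: run (oblivify B r0) x B.source, Good B w :=
          oblivify_chain_good (good_source B) hchain'
        have h1 : ((B.source :: run (oblivify B r0) x B.source).filterMap B.qIdx).Nodup :=
          hro _ (oblivify_chain hchain')
        have hincr := oblivify_incr (r0 := r0) hro (run (oblivify B r0) x B.source)
          B.source (good_source B) hchain'
        have h2 : ((B.source :: run (oblivify B r0) x B.source).filterMap
            (oblivify B r0).qIdx).Nodup :=
          (List.isChain_iff_pairwise.mp hincr).imp (fun h => ne_of_lt h)
        obtain ⟨π, hπ⟩ := exists_perm_of_zip _ _ h1 h2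
        have hagree : ∀ w ∈ B.source :: run (oblivify B r0) x B.source,
            ∀ (i : Fin n) (fc : D → B.V), B.label w = Sum.inl (i, fc) →
            ∀ (i' : Fin n) (fc' : D → B.V), (oblivify B r0).label w = Sum.inl (i', fc') →
              (x ∘ π) i = x i' := by
          intro w hw i fc hli i' fc' hli'
          have hz := zip_spec _ hgood w hw i i' (qIdx_some hli) (qIdx_some hli')
          have hpi := hπ i i' hz
          simp [Function.comp, hpi]
        have hsim := sim x (x ∘ π) B.source (good_source B) hagree
        calc (oblivify B r0).eval x (oblivify B r0).source
            = B.eval (x ∘ π) B.source := hsim.symm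
          _ = f (x ∘ π) := hcomp _
          _ = f x := hsym x π
      · intro p hc
        have hincr := oblivify_incr (r0 := r0) hro p _ (good_source B) hc
        exact (List.isChain_iff_pairwise.mp hincr).imp (fun h => ne_of_lt h)
      · intro p hc
        exact oblivify_incr (r0 := r0) hro p _ (good_source B) hc
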